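/- Let (G,X) be a minimal topological dynamical system, let d ≥ 1 and let x ∈ X. Then the action of the face cube group F^[d] on Y_x^[d](X) is minimal: every F^[d]-orbit in Y_x^[d](X) is dense in Y_x^[d](X). -/

import Mathlib

set_option linter.unusedSectionVars false


/-- Generators of the Host–Kra cube group: `[h]_F` for `F` a hyperface `{ω : ω i = a}`. -/
def hyperfaceGens (G : Type*) [Group G] (d : ℕ) : Set ((Fin d → Bool) → G) :=
  {g | ∃ (h : G) (i : Fin d) (a : Bool), g = fun ω => if ω i = a then h else 1}

/-- Generators of the face cube group: `[h]_F` for `F` an upper hyperface `{ω : ω i = 1}`. -/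
def upperFaceGens (G : Type*) [Group G] (d : ℕ) : Set ((Fin d → Bool) → G) :=
  {g | ∃ (h : G) (i : Fin d), g = fun ω => if ω i = true then h else 1}

/-- The Host–Kra cube group `HK^[d]`. -/
def HK (G : Type*) [Group G] (d : ℕ) : Subgroup ((Fin d → Bool) → G) :=
  Subgroup.closure (hyperfaceGens G d)

/-- The face cube group `F^[d]`. -/
def FG (G : Type*) [Group G] (d : ℕ) : Subgroup ((Fin d → Bool) → G) :=
  Subgroup.closure (upperFaceGens G d)

/-- Coordinatewise action of `G^[d]` on `X^[d]`. -/
def cubeAct {G X : Type*} [Group G] [MulAction G X] {d : ℕ}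
    (g : (Fin d → Bool) → G) (c : (Fin d → Bool) → X) : (Fin d → Bool) → X :=
  fun ω => g ω • c ω

/-- The dynamical cubespace `C_G^[d](X)`: the closure of the set of `HK^[d]`-translates
of constant configurations. -/
def cubeSpace (G X : Type*) [Group G] [MulAction G X] [TopologicalSpace X] (d : ℕ) :
    Set ((Fin d → Bool) → X) :=
  closure {c | ∃ g ∈ HK G d, ∃ x : X, c = cubeAct g (fun _ => x)}

/-- The lower corner `⌞^[d](x,y)`: value `y` at `1⃗`, value `x` elsewhere. -/
def lowerCorner {X : Type*} (d : ℕ) (x y : X) : (Fin d → Bool) → X :=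
  fun ω => if ω = (fun _ => true) then y else x

/-- The upper corner `⌝^[d](x,y)`: value `x` at `0⃗`, value `y` elsewhere. -/
def upperCorner {X : Type*} (d : ℕ) (x y : X) : (Fin d → Bool) → X :=
  fun ω => if ω = (fun _ => false) then x else y

/-- The nilpotent regionally proximal relation of order `d`. -/
def NRP (G X : Type*) [Group G] [MulAction G X] [TopologicalSpace X] (d : ℕ) :
    Set (X × X) :=
  {p | lowerCorner (d + 1) p.1 p.2 ∈ cubeSpace G X (d + 1)}

/-- `Y_x^[d](X)`: the closure of the `F^[d]`-orbit of the constant configuration `x^[d]`. -/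
def Yx (G : Type*) {X : Type*} [Group G] [MulAction G X] [TopologicalSpace X]
    (d : ℕ) (x : X) : Set ((Fin d → Bool) → X) :=
  closure {c | ∃ f ∈ FG G d, c = cubeAct f (fun _ => x)}

/-- `C_x^[d](X)`: cubes whose value at `0⃗` is `x`. -/
def Cx (G : Type*) {X : Type*} [Group G] [MulAction G X] [TopologicalSpace X]
    (d : ℕ) (x : X) : Set ((Fin d → Bool) → X) :=
  {c ∈ cubeSpace G X d | c (fun _ => false) = x}


namespace YxAux

/-! ### Generic compact right-topological semigroup lemmas -/

section Generic

variable {A : Type*} [TopologicalSpace A]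

/-- `I` is a (closed, nonempty) left ideal of `S` for the multiplication `mul`. -/
def LId (mul : A → A → A) (S I : Set A) : Prop :=
  I ⊆ S ∧ I.Nonempty ∧ IsClosed I ∧ ∀ a ∈ S, ∀ b ∈ I, mul a b ∈ I

lemma chain_lb [CompactSpace A] {c : Set (Set A)}
    (h1 : ∀ I ∈ c, I.Nonempty) (h2 : ∀ I ∈ c, IsClosed I)
    (hchain : IsChain (· ⊆ ·) c) (hne : c.Nonempty) :
    (⋂₀ c).Nonempty ∧ IsClosed (⋂₀ c) := by
  constructor
  · rw [Set.sInter_eq_iInter]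
    haveI : Nonempty c := hne.to_subtype
    refine IsCompact.nonempty_iInter_of_directed_nonempty_isCompact_isClosed
      (fun i : c => (i : Set A)) ?_ (fun i => h1 i i.2) (fun i => (h2 i i.2).isCompact)
      (fun i => h2 i i.2)
    intro i j
    rcases hchain.total i.2 j.2 with h | h
    · exact ⟨i, subset_rfl, h⟩
    · exact ⟨j, h, subset_rfl⟩
  · exact isClosed_sInter (fun I hI => h2 I hI)

lemma exists_min_LId [CompactSpace A] (mul : A → A → A) {S J : Set A}
    (hJ : LId mul S J) :
    ∃ I, LId mul S I ∧ I ⊆ J ∧ ∀ I', LId mul S I' → I' ⊆ I → I' = I := by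
  have hzorn := zorn_superset_nonempty {I | LId mul S I} ?_ J hJ
  · obtain ⟨m, hmJ, hm⟩ := hzorn
    exact ⟨m, hm.1, hmJ, fun I' hI' hsub => hm.eq_of_subset hI' hsub⟩
  · intro c hc hchain hne
    obtain ⟨I₀, hI₀⟩ := hne
    have hlb := chain_lb (fun I hI => (hc hI).2.1) (fun I hI => (hc hI).2.2.1) hchain ⟨I₀, hI₀⟩
    refine ⟨⋂₀ c, ⟨?_, hlb.1, hlb.2, ?_⟩, fun s hs => Set.sInter_subset_of_mem hs⟩
    · exact (Set.sInter_subset_of_mem hI₀).trans (hc hI₀).1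
    · intro a ha b hb
      exact Set.mem_sInter.2 fun I hI => (hc hI).2.2.2 a ha b (hb I hI)

lemma exists_idem [CompactSpace A] [T2Space A] (mul : A → A → A)
    (hassoc : ∀ a b c, mul (mul a b) c = mul a (mul b c))
    (hrc : ∀ a, Continuous fun b => mul b a)
    {T : Set A} (hne : T.Nonempty) (hcl : IsClosed T)
    (hmul : ∀ a ∈ T, ∀ b ∈ T, mul a b ∈ T) : ∃ a ∈ T, mul a a = a := by
  -- minimal closed nonempty subsemigroup of T
  have hzorn := zorn_superset_nonempty
    {R : Set A | R ⊆ T ∧ R.Nonempty ∧ IsClosed R ∧ ∀ a ∈ R, ∀ b ∈ R, mul a b ∈ R} ?_ T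
    ⟨le_refl _, hne, hcl, hmul⟩
  · obtain ⟨R, _, hR⟩ := hzorn
    obtain ⟨hRT, ⟨a, haR⟩, hRcl, hRmul⟩ := hR.1
    have hRcpt : IsCompact R := hRcl.isCompact
    -- R * a = R
    have h1 : (fun b => mul b a) '' R = R := by
      apply hR.eq_of_subset
      · refine ⟨?_, ⟨mul a a, a, haR, rfl⟩, (hRcpt.image (hrc a)).isClosed, ?_⟩
        · rintro _ ⟨b, hbR, rfl⟩; exact hRT (hRmul b hbR a haR)
        · rintro _ ⟨p, hpR, rfl⟩ _ ⟨b, hbR, rfl⟩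
          exact ⟨mul (mul p a) b, hRmul _ (hRmul p hpR a haR) b hbR, hassoc _ b a⟩
      · rintro _ ⟨b, hbR, rfl⟩; exact hRmul b hbR a haR
    -- {b ∈ R | mul b a = a} = R
    have h2 : {b ∈ R | mul b a = a} = R := by
      apply hR.eq_of_subset
      · obtain ⟨b, hbR, hba⟩ : ∃ b ∈ R, mul b a = a := by
          have ha' : a ∈ (fun b => mul b a) '' R := by rw [h1]; exact haR
          obtain ⟨b, hbR, hba⟩ := ha'; exact ⟨b, hbR, hba⟩
        refine ⟨fun p hp => hRT hp.1, ⟨b, hbR, hba⟩,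
          hRcl.inter ((isClosed_singleton (x := a)).preimage (hrc a)), ?_⟩
        intro p hp q hq
        exact ⟨hRmul p hp.1 q hq.1, by rw [hassoc, hq.2, hp.2]⟩
      · exact fun p hp => hp.1
    have haa : a ∈ {b ∈ R | mul b a = a} := by rw [h2]; exact haR
    exact ⟨a, hRT haR, haa.2⟩
  · intro c hc hchain hne'
    obtain ⟨I₀, hI₀⟩ := hne'
    have hlb := chain_lb (fun I hI => (hc hI).2.1) (fun I hI => (hc hI).2.2.1) hchain ⟨I₀, hI₀⟩
    refine ⟨⋂₀ c, ⟨(Set.sInter_subset_of_mem hI₀).trans (hc hI₀).1, hlb.1, hlb.2, ?_⟩,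
      fun s hs => Set.sInter_subset_of_mem hs⟩
    intro a ha b hb
    exact Set.mem_sInter.2 fun I hI => (hc hI).2.2.2 a (ha I hI) b (hb I hI)

lemma min_LId_sweep [CompactSpace A] [T2Space A] (mul : A → A → A)
    (hassoc : ∀ a b c, mul (mul a b) c = mul a (mul b c))
    (hrc : ∀ a, Continuous fun b => mul b a)
    {S I : Set A} (hScl : IsClosed S)
    (hSmul : ∀ a ∈ S, ∀ b ∈ S, mul a b ∈ S)
    (hI : LId mul S I) (hImin : ∀ I', LId mul S I' → I' ⊆ I → I' = I)
    {a : A} (ha : a ∈ I) : (fun b => mul b a) '' S = I := by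
  apply hImin
  · refine ⟨?_, ?_, (hScl.isCompact.image (hrc a)).isClosed, ?_⟩
    · rintro _ ⟨b, hbS, rfl⟩; exact hI.1 (hI.2.2.2 b hbS a ha)
    · obtain ⟨b, hb⟩ := hI.2.1
      exact ⟨mul b a, b, hI.1 hb, rfl⟩
    · rintro p hp _ ⟨b, hbS, rfl⟩
      exact ⟨mul p b, hSmul p hp b hbS, hassoc p b a⟩
  · rintro _ ⟨b, hbS, rfl⟩; exact hI.2.2.2 b hbS a ha

lemma closure_mul_mem (mul : A → A → A) {B : Set A}
    (hB : ∀ a ∈ B, ∀ b ∈ B, mul a b ∈ B)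
    (hlc : ∀ a ∈ B, Continuous (mul a))
    (hrc : ∀ a, Continuous fun b => mul b a) :
    ∀ p ∈ closure B, ∀ q ∈ closure B, mul p q ∈ closure B := by
  have step1 : ∀ b ∈ B, ∀ q ∈ closure B, mul b q ∈ closure B := by
    intro b hb q hq
    have := image_closure_subset_closure_image (hlc b hb) (s := B) ⟨q, hq, rfl⟩
    exact closure_mono (Set.image_subset_iff.2 fun a ha => hB b hb a ha) this
  intro p hp q hq
  have h1 : (fun b => mul b q) '' B ⊆ closure B := by
    rintro _ ⟨b, hbB, rfl⟩; exact step1 b hbB q hq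
  have := image_closure_subset_closure_image (hrc q) (s := B) ⟨p, hp, rfl⟩
  have h2 := closure_mono h1 this
  rwa [closure_closure] at h2

end Generic

end YxAux

namespace YxAux

section Concrete

variable (G X : Type*) [Group G] [MulAction G X] [TopologicalSpace X] [CompactSpace X]
  [T2Space X] [ContinuousConstSMul G X]

/-- The map sending a group element to the corresponding transformation of `X`. -/
def sigE : G → X → X := fun g y => g • y

/-- The Ellis semigroup of `(G, X)`. -/
def EE : Set (X → X) := closure (Set.range (sigE G X))

end Concrete

def mulE {X : Type*} : (X → X) → (X → X) → (X → X) := fun p q => p ∘ q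

def mulP {X : Type*} {d : ℕ} :
    ((Fin d → Bool) → X → X) → ((Fin d → Bool) → X → X) → (Fin d → Bool) → X → X :=
  fun p q ω => p ω ∘ q ω

def actP {X : Type*} {d : ℕ} (p : (Fin d → Bool) → X → X) (c : (Fin d → Bool) → X) :
    (Fin d → Bool) → X :=
  fun ω => p ω (c ω)

/-- The face transformation with a fixed Ellis element. -/
def UU {X : Type*} {d : ℕ} (u : X → X) (i : Fin d) : (Fin d → Bool) → X → X :=
  fun ω => if ω i = true then u else fun y => y

/-- Iterated product of the `UU u i`. -/
def WW {X : Type*} {d : ℕ} (u : X → X) : List (Fin d) → (Fin d → Bool) → X → X :=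
  fun l => l.foldr (fun i acc => mulP (UU u i) acc) (fun _ y => y)

section Concrete2

variable (G X : Type*) [Group G] [MulAction G X] [TopologicalSpace X] [CompactSpace X]
  [T2Space X] [ContinuousConstSMul G X]

variable (d : ℕ)

/-- The map sending a cube-group element to the corresponding transformation. -/
def phiP : ((Fin d → Bool) → G) → (Fin d → Bool) → X → X := fun f ω y => f ω • y

/-- Transformations coming from `F^[d]`. -/
def SB : Set ((Fin d → Bool) → X → X) := (phiP G X d) '' ((FG G d : Set ((Fin d → Bool) → G)))

/-- The enveloping semigroup of the `F^[d]`-action (coordinatewise transformations). -/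
def SS : Set ((Fin d → Bool) → X → X) := closure (SB G X d)

variable {G X d}

lemma contE_right (a : X → X) : Continuous fun b : X → X => mulE b a :=
  continuous_pi fun y => continuous_apply (a y)

lemma contP_right (a : (Fin d → Bool) → X → X) :
    Continuous fun b : (Fin d → Bool) → X → X => mulP b a :=
  continuous_pi fun ω => continuous_pi fun y =>
    (continuous_apply (a ω y)).comp (continuous_apply ω)

lemma sigE_mem (g : G) : sigE G X g ∈ EE G X := subset_closure ⟨g, rfl⟩

lemma EE_mul : ∀ p ∈ EE G X, ∀ q ∈ EE G X, mulE p q ∈ EE G X := by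
  apply closure_mul_mem
  · rintro _ ⟨g, rfl⟩ _ ⟨g', rfl⟩
    exact ⟨g * g', by funext y; exact mul_smul g g' y⟩
  · rintro _ ⟨g, rfl⟩
    exact continuous_pi fun y => (continuous_apply y).const_smul g
  · exact contE_right

lemma phiP_mem {f : (Fin d → Bool) → G} (hf : f ∈ FG G d) :
    phiP G X d f ∈ SS G X d := subset_closure ⟨f, hf, rfl⟩

lemma phiP_mul (f f' : (Fin d → Bool) → G) :
    mulP (phiP G X d f) (phiP G X d f') = phiP G X d (f * f') := by
  funext ω y
  show f ω • (f' ω • y) = (f * f') ω • y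
  rw [Pi.mul_apply, mul_smul]

lemma SS_mul : ∀ p ∈ SS G X d, ∀ q ∈ SS G X d, mulP p q ∈ SS G X d := by
  apply closure_mul_mem
  · rintro _ ⟨f, hf, rfl⟩ _ ⟨f', hf', rfl⟩
    exact ⟨f * f', mul_mem hf hf', (phiP_mul f f').symm⟩
  · rintro _ ⟨f, hf, rfl⟩
    exact continuous_pi fun ω => continuous_pi fun y =>
      (continuous_const_smul (f ω)).comp ((continuous_apply y).comp (continuous_apply ω))
  · exact contP_right

lemma SS_apply_mem_EE {p : (Fin d → Bool) → X → X} (hp : p ∈ SS G X d) (ω : Fin d → Bool) :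
    p ω ∈ EE G X := by
  have h1 : (fun q : (Fin d → Bool) → X → X => q ω) '' SB G X d ⊆ Set.range (sigE G X) := by
    rintro _ ⟨_, ⟨f, hf, rfl⟩, rfl⟩
    exact ⟨f ω, rfl⟩
  have h2 := image_closure_subset_closure_image (continuous_apply ω) (s := SB G X d)
    ⟨p, hp, rfl⟩
  exact closure_mono h1 h2

lemma fg_zero {f : (Fin d → Bool) → G} (hf : f ∈ FG G d) : f (fun _ => false) = 1 := by
  refine Subgroup.closure_induction
    (p := fun (f : (Fin d → Bool) → G) _ => f (fun _ => false) = 1) ?_ rfl ?_ ?_ hf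
  · rintro _ ⟨h, i, rfl⟩; simp
  · intro a b _ _ ha hb; rw [Pi.mul_apply, ha, hb, one_mul]
  · intro a _ ha; rw [Pi.inv_apply, ha, inv_one]

lemma SS_apply_zero {p : (Fin d → Bool) → X → X} (hp : p ∈ SS G X d) :
    p (fun _ => false) = fun y => y := by
  have h1 : (fun q : (Fin d → Bool) → X → X => q (fun _ => false)) '' SB G X d ⊆
      {fun y : X => y} := by
    rintro _ ⟨_, ⟨f, hf, rfl⟩, rfl⟩
    show phiP G X d f (fun _ => false) ∈ _
    have : phiP G X d f (fun _ => false) = fun y : X => y := by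
      funext y; show f (fun _ => false) • y = y
      rw [fg_zero hf, one_smul]
    simp [this]
  have h2 := image_closure_subset_closure_image
    (continuous_apply (fun _ : Fin d => false)) (s := SB G X d) ⟨p, hp, rfl⟩
  have h3 := closure_mono h1 h2
  rwa [closure_singleton, Set.mem_singleton_iff] at h3

lemma id_mem_SS : (fun (_ : Fin d → Bool) (y : X) => y) ∈ SS G X d := by
  have : phiP G X d 1 = fun (_ : Fin d → Bool) (y : X) => y := by
    funext ω y; show (1 : G) • y = y; rw [one_smul]
  rw [← this]
  exact phiP_mem (one_mem _)

lemma UU_mem {u : X → X} (hu : u ∈ EE G X) (i : Fin d) : UU u i ∈ SS G X d := by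
  set Ψ : (X → X) → (Fin d → Bool) → X → X :=
    fun e ω => if ω i = true then e else fun y => y with hΨ
  have hc : Continuous Ψ := by
    apply continuous_pi; intro ω
    by_cases h : ω i = true
    · simp only [hΨ, if_pos h]; exact continuous_id
    · simp only [hΨ, if_neg h]; exact continuous_const
  have himg : Ψ '' Set.range (sigE G X) ⊆ SB G X d := by
    rintro _ ⟨_, ⟨g, rfl⟩, rfl⟩
    refine ⟨fun ω => if ω i = true then g else 1, Subgroup.subset_closure ⟨g, i, rfl⟩, ?_⟩
    funext ω y
    by_cases h : ω i = true
    · simp [hΨ, phiP, h, sigE]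
    · simp [hΨ, phiP, h]
  have h2 := image_closure_subset_closure_image hc (s := Set.range (sigE G X)) ⟨u, hu, rfl⟩
  exact closure_mono himg h2

lemma WW_mem {u : X → X} (hu : u ∈ EE G X) (l : List (Fin d)) : WW u l ∈ SS G X d := by
  induction l with
  | nil => exact id_mem_SS
  | cons i l ih => exact SS_mul _ (UU_mem hu i) _ ih

lemma WW_cases {u : X → X} (l : List (Fin d)) (ω : Fin d → Bool) (hu : mulE u u = u) :
    WW u l ω = (fun y => y) ∨ WW u l ω = u := by
  induction l with
  | nil => exact Or.inl rfl
  | cons i l ih =>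
    show mulP (UU u i) (WW u l) ω = _ ∨ _
    by_cases h : ω i = true
    · rcases ih with h' | h'
      · right; show UU u i ω ∘ WW u l ω = u
        rw [h']; simp only [UU, if_pos h]; rfl
      · right; show UU u i ω ∘ WW u l ω = u
        rw [h']; simp only [UU, if_pos h]; exact hu
    · rcases ih with h' | h'
      · left; show UU u i ω ∘ WW u l ω = _
        rw [h']; simp only [UU, if_neg h]; rfl
      · right; show UU u i ω ∘ WW u l ω = u
        rw [h']; simp only [UU, if_neg h]; rfl

lemma WW_all_false {u : X → X} (l : List (Fin d)) (ω : Fin d → Bool)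
    (h : ∀ i ∈ l, ω i = false) : WW u l ω = fun y => y := by
  induction l with
  | nil => rfl
  | cons i l ih =>
    show UU u i ω ∘ WW u l ω = _
    have hi : ¬(ω i = true) := by simp [h i List.mem_cons_self]
    rw [ih (fun j hj => h j (List.mem_cons_of_mem i hj))]
    simp only [UU, if_neg hi]
    rfl

lemma WW_exists_true {u : X → X} (hu : mulE u u = u) (l : List (Fin d)) (ω : Fin d → Bool)
    (h : ∃ i ∈ l, ω i = true) : WW u l ω = u := by
  induction l with
  | nil => simp at h
  | cons i l ih =>
    show UU u i ω ∘ WW u l ω = u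
    rcases h with ⟨j, hj, hjt⟩
    rcases List.mem_cons.1 hj with rfl | hjl
    · simp only [UU, if_pos hjt]
      rcases WW_cases (u := u) l ω hu with h' | h'
      · rw [h']; rfl
      · rw [h']; exact hu
    · rw [ih ⟨j, hjl, hjt⟩]
      by_cases hi : ω i = true
      · simp only [UU, if_pos hi]; exact hu
      · simp only [UU, if_neg hi]; rfl

lemma exists_u (x : X) (hmin : ∀ y : X, Dense (MulAction.orbit G y)) :
    ∃ (L₀ : Set (X → X)) (u : X → X),
      LId mulE (EE G X) L₀ ∧ (∀ I', LId mulE (EE G X) I' → I' ⊆ L₀ → I' = L₀) ∧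
      u ∈ L₀ ∧ mulE u u = u ∧ u x = x := by
  have hEid : LId mulE (EE G X) (EE G X) :=
    ⟨subset_rfl, ⟨_, sigE_mem (1 : G)⟩, isClosed_closure, EE_mul⟩
  obtain ⟨L₀, hL₀, _, hL₀min⟩ := exists_min_LId mulE hEid
  obtain ⟨p₀, hp₀⟩ := hL₀.2.1
  have hAcl : IsClosed ((fun p : X → X => p x) '' L₀) :=
    ((hL₀.2.2.1.isCompact.image (continuous_apply x))).isClosed
  have horb : MulAction.orbit G (p₀ x) ⊆ (fun p : X → X => p x) '' L₀ := by
    rintro _ ⟨g, rfl⟩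
    exact ⟨mulE (sigE G X g) p₀, hL₀.2.2.2 _ (sigE_mem g) _ hp₀, rfl⟩
  have hx' : x ∈ (fun p : X → X => p x) '' L₀ := by
    have h1 := (hmin (p₀ x)).closure_eq
    have h2 := closure_minimal horb hAcl
    rw [h1] at h2
    exact h2 (Set.mem_univ x)
  obtain ⟨p₁, hp₁L, hp₁x⟩ := hx'
  have hidem := exists_idem mulE (fun _ _ _ => rfl) contE_right
    (T := {p ∈ L₀ | p x = x}) ⟨p₁, hp₁L, hp₁x⟩
    (hL₀.2.2.1.inter (isClosed_eq (continuous_apply x) continuous_const)) ?_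
  · obtain ⟨u, huT, huu⟩ := hidem
    exact ⟨L₀, u, hL₀, hL₀min, huT.1, huu, huT.2⟩
  · intro a ha b hb
    refine ⟨hL₀.2.2.2 a (hL₀.1 ha.1) b hb.1, ?_⟩
    show a (b x) = x
    rw [hb.2, ha.2]

end Concrete2

end YxAux


set_option maxHeartbeats 1000000 in
open YxAux in
/-- For a minimal t.d.s. `(G,X)`, the action of the face cube group `F^[d]` on
`Y_x^[d](X)` is minimal: every `F^[d]`-orbit in `Y_x^[d](X)` is dense in it. -/
theorem Yx_FG_minimal
    {G X : Type*} [Group G] [TopologicalSpace G] [IsTopologicalGroup G]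
    [TopologicalSpace X] [CompactSpace X] [T2Space X]
    [MulAction G X] [ContinuousSMul G X]
    {d : ℕ} (hd : 1 ≤ d)
    (hmin : ∀ x : X, Dense (MulAction.orbit G x)) (x : X) :
    ∀ c ∈ Yx G d x, Yx G d x ⊆ closure {c' | ∃ f ∈ FG G d, c' = cubeAct f c} := by
  classical
  have hSScl : IsClosed (SS G X d) := isClosed_closure
  have horbit : ∀ c : (Fin d → Bool) → X,
      {c' | ∃ f ∈ FG G d, c' = cubeAct f c} = (fun p => actP p c) '' SB G X d := by
    intro c
    ext c'
    constructor
    · rintro ⟨f, hf, rfl⟩; exact ⟨phiP G X d f, ⟨f, hf, rfl⟩, rfl⟩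
    · rintro ⟨_, ⟨f, hf, rfl⟩, rfl⟩; exact ⟨f, hf, rfl⟩
  have hcont_ev : ∀ c : (Fin d → Bool) → X,
      Continuous fun p : (Fin d → Bool) → X → X => actP p c :=
    fun c => continuous_pi fun ω => (continuous_apply (c ω)).comp (continuous_apply ω)
  have hYsub : Yx G d x ⊆ (fun p => actP p (fun _ => x)) '' SS G X d := by
    have hcpt : IsClosed ((fun p => actP p (fun _ => x)) '' SS G X d) :=
      ((hSScl.isCompact.image (hcont_ev _))).isClosed
    apply closure_minimal _ hcpt
    rw [horbit]
    exact Set.image_mono subset_closure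
  have hD1 : ∀ (c : (Fin d → Bool) → X), ∀ p ∈ SS G X d,
      actP p c ∈ closure {c' | ∃ f ∈ FG G d, c' = cubeAct f c} := by
    intro c p hp
    rw [horbit]
    exact image_closure_subset_closure_image (hcont_ev c) ⟨p, hp, rfl⟩
  obtain ⟨L₀, u, hL₀, hL₀min, huL, huu, hux⟩ := exists_u (G := G) (X := X) x hmin
  have huE : u ∈ EE G X := hL₀.1 huL
  set v : (Fin d → Bool) → X → X := WW u (List.finRange d) with hv
  have hvSS : v ∈ SS G X d := WW_mem huE _
  have hv0 : v (fun _ => false) = fun y => y := WW_all_false _ _ (fun i _ => rfl)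
  have hvne : ∀ ω : Fin d → Bool, ω ≠ (fun _ => false) → v ω = u := by
    intro ω hω
    apply WW_exists_true huu
    by_contra h
    push_neg at h
    apply hω
    funext i
    simpa using h i (List.mem_finRange i)
  have hJ : LId mulP (SS G X d) ((fun b => mulP b v) '' SS G X d) := by
    refine ⟨?_, ⟨mulP v v, v, hvSS, rfl⟩, (hSScl.isCompact.image (contP_right v)).isClosed, ?_⟩
    · rintro _ ⟨b, hb, rfl⟩; exact SS_mul b hb v hvSS
    · rintro a ha _ ⟨b, hb, rfl⟩
      exact ⟨mulP a b, SS_mul a ha b hb, rfl⟩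
  obtain ⟨M₀, hM₀, hM₀J, hM₀min⟩ := exists_min_LId mulP hJ
  obtain ⟨w, hwM, hww⟩ := exists_idem mulP (fun _ _ _ => rfl) contP_right
    hM₀.2.1 hM₀.2.2.1 (fun a ha b hb => hM₀.2.2.2 a (hM₀.1 ha) b hb)
  obtain ⟨p', hp'S, hp'w⟩ := hM₀J hwM
  have hkey : ∀ ω : Fin d → Bool, ω ≠ (fun _ => false) → mulE u (w ω) = u := by
    intro ω hω
    have hwω : w ω ∈ L₀ := by
      have hrep : w ω = mulE (p' ω) u := by
        rw [← hp'w]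
        show p' ω ∘ v ω = p' ω ∘ u
        rw [hvne ω hω]
      rw [hrep]
      exact hL₀.2.2.2 _ (SS_apply_mem_EE hp'S ω) _ huL
    have hsweep := min_LId_sweep (S := EE G X) mulE (fun _ _ _ => rfl) contE_right isClosed_closure
      EE_mul hL₀ hL₀min hwω
    have hu' : u ∈ (fun b => mulE b (w ω)) '' EE G X := by rw [hsweep]; exact huL
    obtain ⟨r, hrE, hre⟩ := hu'
    have hre' : mulE r (w ω) = u := hre
    have hwωid : mulE (w ω) (w ω) = w ω := congrFun hww ω
    have hstep : mulE (mulE r (w ω)) (w ω) = mulE r (w ω) := by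
      show mulE r (mulE (w ω) (w ω)) = mulE r (w ω)
      rw [hwωid]
    rw [hre'] at hstep
    exact hstep
  have hvw : mulP v w = v := by
    funext ω
    by_cases hω : ω = (fun _ => false)
    · subst hω
      show v _ ∘ w _ = v _
      rw [hv0, SS_apply_zero (hM₀.1 hwM)]
      rfl
    · show v ω ∘ w ω = v ω
      rw [hvne ω hω]
      exact hkey ω hω
  have hvM : v ∈ M₀ := by
    have h := hM₀.2.2.2 v hvSS w hwM
    rwa [hvw] at h
  intro c hc y hy
  obtain ⟨p, hpS, hpc⟩ := hYsub hc
  obtain ⟨r, hrS, hry⟩ := hYsub hy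
  have hpc' : actP p (fun _ => x) = c := hpc
  have hry' : actP r (fun _ => x) = y := hry
  have hpvM : mulP p v ∈ M₀ := hM₀.2.2.2 p hpS v hvM
  have hsweep2 := min_LId_sweep (S := SS G X d) mulP (fun _ _ _ => rfl) contP_right hSScl SS_mul
    hM₀ hM₀min hpvM
  have hv' : v ∈ (fun b => mulP b (mulP p v)) '' SS G X d := by rw [hsweep2]; exact hvM
  obtain ⟨q, hqS, hqv⟩ := hv'
  have hqv' : mulP q (mulP p v) = v := hqv
  have hvx : actP v (fun _ => x) = fun _ => x := by
    funext ω
    by_cases hω : ω = (fun _ => false)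
    · subst hω
      show v _ x = x
      rw [hv0]
    · show v ω x = x
      rw [hvne ω hω]
      exact hux
  have hmain : actP (mulP r q) c = y := by
    rw [← hpc', ← hry']
    calc actP (mulP r q) (actP p (fun _ => x))
        = actP (mulP r q) (actP p (actP v (fun _ => x))) := by rw [hvx]
      _ = actP (mulP r (mulP q (mulP p v))) (fun _ => x) := rfl
      _ = actP (mulP r v) (fun _ => x) := by rw [hqv']
      _ = actP r (actP v (fun _ => x)) := rfl
      _ = actP r (fun _ => x) := by rw [hvx]
  rw [← hmain]
  exact hD1 c (mulP r q) (SS_mul r hrS q hqS)
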